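/- arXiv:2003.08190 — 2 statements merged into one kernel-verified Lean document; each statement's English description precedes it below -/
import Mathlib

section
/- Let T be the triangle with vertices (0,0), (s, 0), (s, t) for s, t > 0, and let P be the triangle {(u,v) : 0 < u < s, 0 < v < (t/s)·u}. Then ∫_{(u,v)∈P} area(T ∩ (T + (u,v))) du dv = (1/6)·area(T)² = s²t²/24. -/
open MeasureTheory Set


lemma vol_region (a b c m : ℝ) (hab : a ≤ b) (hm : 0 ≤ m) :
    volume {p : ℝ × ℝ | a ≤ p.1 ∧ p.1 ≤ b ∧ c ≤ p.2 ∧ p.2 ≤ m * (p.1 - a) + c}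
      = ENNReal.ofReal (m * (b - a) ^ 2 / 2) := by
  set S : Set (ℝ × ℝ) := {p : ℝ × ℝ | a ≤ p.1 ∧ p.1 ≤ b ∧ c ≤ p.2 ∧ p.2 ≤ m * (p.1 - a) + c}
  have hS : MeasurableSet S := by
    apply MeasurableSet.inter (measurableSet_le measurable_const measurable_fst)
    apply MeasurableSet.inter (measurableSet_le measurable_fst measurable_const)
    exact (measurableSet_le measurable_const measurable_snd).inter
      (measurableSet_le measurable_snd (by fun_prop))
  rw [MeasureTheory.Measure.volume_eq_prod, Measure.prod_apply hS]
  have hsec : ∀ x, volume (Prod.mk x ⁻¹' S)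
      = (Icc a b).indicator (fun x => ENNReal.ofReal (m * (x - a))) x := by
    intro x
    by_cases hx : x ∈ Icc a b
    · have : Prod.mk x ⁻¹' S = Icc c (m * (x - a) + c) := by
        ext y; simp [S, hx.1, hx.2, Set.mem_Icc]
      rw [this, Real.volume_Icc, indicator_of_mem hx]
      congr 1; ring
    · have : Prod.mk x ⁻¹' S = ∅ := by
        ext y; simp only [Set.mem_preimage, Set.mem_setOf_eq, Set.mem_empty_iff_false,
          iff_false, S]
        simp only [Set.mem_Icc, not_and_or, not_le] at hx
        rcases hx with h | h <;> intro hy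
        · exact absurd hy.1 (not_le.2 h)
        · exact absurd hy.2.1 (not_le.2 h)
      rw [this, indicator_of_notMem hx, measure_empty]
  rw [lintegral_congr hsec, lintegral_indicator measurableSet_Icc _]
  rw [← MeasureTheory.ofReal_integral_eq_lintegral_ofReal]
  · congr 1
    rw [MeasureTheory.integral_Icc_eq_integral_Ioc, ← intervalIntegral.integral_of_le hab,
      intervalIntegral.integral_const_mul,
      intervalIntegral.integral_sub intervalIntegral.intervalIntegrable_id intervalIntegrable_const,
      integral_id, intervalIntegral.integral_const]
    simp only [smul_eq_mul]; ring
  · exact (Continuous.integrableOn_Icc (by fun_prop))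
  · filter_upwards [ae_restrict_mem measurableSet_Icc] with x hx
    simp only [Pi.zero_apply]; nlinarith [hx.1]

lemma T_desc (s t : ℝ) (hs : 0 < s) (ht : 0 < t) :
    convexHull ℝ {((0:ℝ), (0:ℝ)), (s, 0), (s, t)}
      = {p : ℝ × ℝ | 0 ≤ p.1 ∧ p.1 ≤ s ∧ 0 ≤ p.2 ∧ p.2 ≤ t / s * p.1} := by
  apply Subset.antisymm
  · apply convexHull_min
    · rintro p hp
      simp only [Set.mem_insert_iff, Set.mem_singleton_iff] at hp
      rcases hp with rfl | rfl | rfl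
      · exact ⟨le_refl 0, hs.le, le_refl 0, by simp⟩
      · exact ⟨hs.le, le_refl s, le_refl 0, by positivity⟩
      · exact ⟨hs.le, le_refl s, ht.le, by rw [div_mul_cancel₀ t hs.ne']⟩
    · rintro p ⟨hp1, hp2, hp3, hp4⟩ q ⟨hq1, hq2, hq3, hq4⟩ a b ha hb hab
      simp only [Set.mem_setOf_eq, Prod.fst_add, Prod.snd_add, Prod.smul_fst, Prod.smul_snd,
        smul_eq_mul]
      refine ⟨by positivity, by nlinarith, by positivity, by nlinarith⟩
  · rintro p ⟨hp1, hp2, hp3, hp4⟩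
    rcases eq_or_lt_of_le hp1 with h0 | h0
    · have hp30 : p.2 = 0 := by
        have h4 : t / s * p.1 = 0 := by rw [← h0]; ring
        linarith [hp4, h4.le]
      have : p = ((0:ℝ), (0:ℝ)) := Prod.ext h0.symm hp30
      rw [this]
      exact subset_convexHull ℝ _ (by simp)
    · -- p.1 > 0 : p on segment from (0,0) to r := (s, s * p.2 / p.1)
      set r : ℝ × ℝ := (s, s * p.2 / p.1) with hr
      have hrBC : r ∈ segment ℝ ((s:ℝ), (0:ℝ)) (s, t) := by
        rw [segment_eq_image]
        refine ⟨p.2 / p.1 * (s / t), ⟨by positivity, ?_⟩, ?_⟩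
        · have hp4' : p.2 * s ≤ t * p.1 := by
            rw [div_mul_eq_mul_div, le_div_iff₀ hs] at hp4; linarith
          have he : p.2 / p.1 * (s / t) = p.2 * s / t / p.1 := by ring
          rw [he, div_le_one h0, div_le_iff₀ ht]
          nlinarith
        · simp only [Prod.ext_iff, hr]
          constructor
          · simp; ring
          · simp; field_simp
      have hrT : r ∈ convexHull ℝ {((0:ℝ), (0:ℝ)), (s, 0), (s, t)} := by
        have hsub : segment ℝ ((s:ℝ), (0:ℝ)) ((s:ℝ), t) ⊆
            convexHull ℝ {((0:ℝ), (0:ℝ)), (s, 0), (s, t)} := by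
          apply (convex_convexHull ℝ _).segment_subset <;>
            exact subset_convexHull ℝ _ (by simp)
        exact hsub hrBC
      have h0T : ((0:ℝ), (0:ℝ)) ∈ convexHull ℝ {((0:ℝ), (0:ℝ)), (s, 0), (s, t)} :=
        subset_convexHull ℝ _ (by simp)
      have hpseg : p ∈ segment ℝ ((0:ℝ), (0:ℝ)) r := by
        rw [segment_eq_image]
        refine ⟨p.1 / s, ⟨by positivity, by rw [div_le_one hs]; exact hp2⟩, ?_⟩
        simp only [Prod.ext_iff, hr]
        constructor
        · simp; field_simp
        · simp; field_simp
      exact (convex_convexHull ℝ _).segment_subset h0T hrT hpseg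

lemma inter_desc (s t : ℝ) (hs : 0 < s) (ht : 0 < t) (w : ℝ × ℝ)
    (hu0 : 0 < w.1) (hus : w.1 < s) (hv0 : 0 < w.2) (hv : w.2 < t / s * w.1) :
    {p : ℝ × ℝ | 0 ≤ p.1 ∧ p.1 ≤ s ∧ 0 ≤ p.2 ∧ p.2 ≤ t / s * p.1} ∩
      ((fun x => x + w) '' {p : ℝ × ℝ | 0 ≤ p.1 ∧ p.1 ≤ s ∧ 0 ≤ p.2 ∧ p.2 ≤ t / s * p.1})
      = {p : ℝ × ℝ | w.1 ≤ p.1 ∧ p.1 ≤ s ∧ w.2 ≤ p.2 ∧ p.2 ≤ t / s * (p.1 - w.1) + w.2} := by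
  have himg : ((fun x => x + w) '' {p : ℝ × ℝ | 0 ≤ p.1 ∧ p.1 ≤ s ∧ 0 ≤ p.2 ∧ p.2 ≤ t / s * p.1})
      = {p : ℝ × ℝ | 0 ≤ p.1 - w.1 ∧ p.1 - w.1 ≤ s ∧ 0 ≤ p.2 - w.2 ∧
          p.2 - w.2 ≤ t / s * (p.1 - w.1)} := by
    ext p
    constructor
    · rintro ⟨x, hx, rfl⟩
      simpa [Prod.fst_add, Prod.snd_add] using hx
    · intro h
      exact ⟨p - w, by simpa [Prod.fst_sub, Prod.snd_sub] using h, by simp⟩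
  rw [himg]
  ext p
  simp only [Set.mem_inter_iff, Set.mem_setOf_eq]
  constructor
  · rintro ⟨⟨h1, h2, h3, h4⟩, g1, g2, g3, g4⟩
    exact ⟨by linarith, h2, by linarith, by linarith⟩
  · rintro ⟨k1, k2, k3, k4⟩
    have hts : 0 < t / s := by positivity
    refine ⟨⟨by linarith, k2, by linarith, ?_⟩, by linarith, by linarith, by linarith, by linarith⟩
    nlinarith

lemma P_meas (s t : ℝ) :
    MeasurableSet {p : ℝ × ℝ | 0 < p.1 ∧ p.1 < s ∧ 0 < p.2 ∧ p.2 < t / s * p.1} := by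
  apply MeasurableSet.inter (measurableSet_lt measurable_const measurable_fst)
  apply MeasurableSet.inter (measurableSet_lt measurable_fst measurable_const)
  exact (measurableSet_lt measurable_const measurable_snd).inter
    (measurableSet_lt measurable_snd (by fun_prop))

lemma poly_integral (s t : ℝ) (hs : 0 < s) :
    ∫ x in (0:ℝ)..s, (t / s * (s - x) ^ 2 / 2 * (t / s * x)) = s ^ 2 * t ^ 2 / 24 := by
  have key : ∀ x ∈ Set.uIcc (0:ℝ) s, HasDerivAt
      (fun x : ℝ => t ^ 2 / s ^ 2 * (s ^ 2 * x ^ 2 / 4 - s * x ^ 3 / 3 + x ^ 4 / 8))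
      (t / s * (s - x) ^ 2 / 2 * (t / s * x)) x := by
    intro x _
    have h1 : HasDerivAt (fun x : ℝ => s ^ 2 * x ^ 2 / 4 - s * x ^ 3 / 3 + x ^ 4 / 8)
        (s ^ 2 * (2 * x) / 4 - s * (3 * x ^ 2) / 3 + (4 * x ^ 3) / 8) x := by
      have h2 := (hasDerivAt_pow 2 x).const_mul (s ^ 2) |>.div_const 4
      have h3 := (hasDerivAt_pow 3 x).const_mul s |>.div_const 3
      have h4 := (hasDerivAt_pow 4 x).div_const 8
      have h5 := (h2.sub h3).add h4
      simp at h5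
      exact h5
    have := h1.const_mul (t ^ 2 / s ^ 2)
    refine this.congr_deriv ?_
    ring
  rw [intervalIntegral.integral_eq_sub_of_hasDerivAt key (Continuous.intervalIntegrable (by fun_prop) _ _)]
  field_simp
  ring

lemma integ (s t : ℝ) (hs : 0 < s) (ht : 0 < t) :
    ∫ w in {p : ℝ × ℝ | 0 < p.1 ∧ p.1 < s ∧ 0 < p.2 ∧ p.2 < t / s * p.1},
      t / s * (s - w.1) ^ 2 / 2 = s ^ 2 * t ^ 2 / 24 := by
  set P : Set (ℝ × ℝ) := {p : ℝ × ℝ | 0 < p.1 ∧ p.1 < s ∧ 0 < p.2 ∧ p.2 < t / s * p.1} with hPdef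
  have hPm : MeasurableSet P := P_meas s t
  have hPsub : P ⊆ Set.Icc ((0:ℝ), (0:ℝ)) (s, t) := by
    rintro p ⟨h1, h2, h3, h4⟩
    have hts : 0 < t / s := by positivity
    constructor
    · exact ⟨h1.le, h3.le⟩
    · refine ⟨h2.le, ?_⟩
      have : t / s * p.1 ≤ t / s * s := by nlinarith
      rw [div_mul_cancel₀ t hs.ne'] at this
      linarith
  have hcont : Continuous (fun w : ℝ × ℝ => t / s * (s - w.1) ^ 2 / 2) := by fun_prop
  have hint : IntegrableOn (fun w : ℝ × ℝ => t / s * (s - w.1) ^ 2 / 2) P := by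
    exact (hcont.continuousOn.integrableOn_compact isCompact_Icc).mono_set hPsub
  have hind : Integrable (P.indicator (fun w : ℝ × ℝ => t / s * (s - w.1) ^ 2 / 2)) :=
    (integrable_indicator_iff hPm).2 hint
  rw [← integral_indicator hPm]
  rw [MeasureTheory.Measure.volume_eq_prod] at hind ⊢
  rw [MeasureTheory.integral_prod _ hind]
  have hinner : ∀ x : ℝ, (∫ y : ℝ, P.indicator (fun w : ℝ × ℝ => t / s * (s - w.1) ^ 2 / 2) (x, y))
      = (Set.Ioo 0 s).indicator (fun x => t / s * x * (t / s * (s - x) ^ 2 / 2)) x := by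
    intro x
    by_cases hx : x ∈ Set.Ioo (0:ℝ) s
    · have hfy : (fun y => P.indicator (fun w : ℝ × ℝ => t / s * (s - w.1) ^ 2 / 2) (x, y))
          = (Set.Ioo 0 (t / s * x)).indicator (fun _ => t / s * (s - x) ^ 2 / 2) := by
        funext y
        have hiff : ((x, y) ∈ P) ↔ y ∈ Set.Ioo 0 (t / s * x) := by
          simp [hPdef, Set.mem_Ioo, hx.1, hx.2]
        simp only [Set.indicator_apply, hiff]
      rw [hfy, MeasureTheory.integral_indicator_const _ measurableSet_Ioo,
        Set.indicator_of_mem hx, Real.volume_real_Ioo_of_le (mul_nonneg (div_nonneg ht.le hs.le) hx.1.le), sub_zero,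
        smul_eq_mul]
    · have hzero : ∀ y : ℝ, P.indicator (fun w : ℝ × ℝ => t / s * (s - w.1) ^ 2 / 2) (x, y) = 0 := by
        intro y
        apply Set.indicator_of_notMem
        simp only [Set.mem_Ioo, not_and_or, not_lt] at hx
        intro hmem
        rcases hx with h | h
        · exact absurd hmem.1 (not_lt.2 h)
        · exact absurd hmem.2.1 (not_lt.2 h)
      simp only [hzero, integral_zero, Set.indicator_of_notMem hx]
  simp only [hinner]
  rw [integral_indicator measurableSet_Ioo, ← MeasureTheory.integral_Ioc_eq_integral_Ioo,
    ← intervalIntegral.integral_of_le hs.le]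
  rw [← poly_integral s t hs]
  congr 1
  funext x
  ring


theorem FP4TT (s t : ℝ) (hs : 0 < s) (ht : 0 < t) :
    let T : Set (ℝ × ℝ) := convexHull ℝ {(0, 0), (s, 0), (s, t)}
    let P : Set (ℝ × ℝ) := {p | 0 < p.1 ∧ p.1 < s ∧ 0 < p.2 ∧ p.2 < t / s * p.1}
    (∫ w in P, (volume (T ∩ ((fun x => x + w) '' T))).toReal)
        = 1 / 6 * (volume T).toReal ^ 2 ∧
    (∫ w in P, (volume (T ∩ ((fun x => x + w) '' T))).toReal)
        = s ^ 2 * t ^ 2 / 24 := by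
  intro T P
  have hT : T = {p : ℝ × ℝ | 0 ≤ p.1 ∧ p.1 ≤ s ∧ 0 ≤ p.2 ∧ p.2 ≤ t / s * p.1} :=
    T_desc s t hs ht
  have hPm : MeasurableSet P := P_meas s t
  have hvolT : (volume T).toReal = s * t / 2 := by
    have hset : {p : ℝ × ℝ | 0 ≤ p.1 ∧ p.1 ≤ s ∧ 0 ≤ p.2 ∧ p.2 ≤ t / s * p.1}
        = {p : ℝ × ℝ | 0 ≤ p.1 ∧ p.1 ≤ s ∧ 0 ≤ p.2 ∧ p.2 ≤ t / s * (p.1 - 0) + 0} := by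
      simp
    rw [hT, hset, vol_region 0 s 0 (t / s) hs.le (by positivity),
      ENNReal.toReal_ofReal (by positivity)]
    field_simp
    ring
  have hsect : ∀ w ∈ P, (volume (T ∩ ((fun x => x + w) '' T))).toReal
      = t / s * (s - w.1) ^ 2 / 2 := by
    rintro w ⟨hu0, hus, hv0, hv⟩
    rw [hT, inter_desc s t hs ht w hu0 hus hv0 hv,
      vol_region w.1 s w.2 (t / s) hus.le (by positivity),
      ENNReal.toReal_ofReal (by positivity)]
  have hval : (∫ w in P, (volume (T ∩ ((fun x => x + w) '' T))).toReal)
      = s ^ 2 * t ^ 2 / 24 := by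
    rw [MeasureTheory.setIntegral_congr_fun hPm hsect]
    exact integ s t hs ht
  refine ⟨?_, hval⟩
  rw [hval, hvolT]
  ring
end

section
/- Let 0 ≤ s, t ≤ 1/2, let Q = [-1/2,1/2]², let T be the triangle with vertices (1/2 - s, 1/2), (1/2, 1/2), (1/2, 1/2 - t), and let H = Q \ (T ∪ (-T)). Writing F(A,B,C) = ∫_{a∈A} area(B ∩ (C + a)) da, one has F(H,H,H) = F(Q,Q,Q) - 4·F(H,H,T) - 2·F(H,T,T) - 2·F(T,Q,Q). -/
set_option maxHeartbeats 1000000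

open MeasureTheory

open Set in
private lemma FSep_image_add_eq (C : Set (ℝ × ℝ)) (a : ℝ × ℝ) :
    (fun x => x + a) '' C = (fun x => x - a) ⁻¹' C := by
  ext y
  constructor
  · rintro ⟨x, hx, rfl⟩; simpa using hx
  · intro h; exact ⟨y - a, h, sub_add_cancel y a⟩

private lemma FSep_measurable_vol (B C : Set (ℝ × ℝ)) (hB : MeasurableSet B)
    (hC : MeasurableSet C) :
    Measurable fun a : ℝ × ℝ => volume (B ∩ ((fun x => x + a) '' C)) := by
  have hS : MeasurableSet {p : (ℝ × ℝ) × (ℝ × ℝ) | p.2 ∈ B ∧ p.2 - p.1 ∈ C} :=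
    (hB.preimage measurable_snd).inter (hC.preimage (measurable_snd.sub measurable_fst))
  have h := measurable_measure_prodMk_left (ν := (volume : Measure (ℝ × ℝ))) hS
  convert h using 2 with a
  rw [FSep_image_add_eq]
  rfl

noncomputable def F (A B C : Set (ℝ × ℝ)) : ℝ :=
  ∫ a in A, (volume (B ∩ ((fun x => x + a) '' C))).toReal

open Set in
private lemma FSep_intOn (A B C : Set (ℝ × ℝ)) (hB : MeasurableSet B)
    (hC : MeasurableSet C) (hAf : volume A ≠ ⊤) (hBf : volume B ≠ ⊤) :
    IntegrableOn (fun a => (volume (B ∩ ((fun x => x + a) '' C))).toReal) A := by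
  have hmeas := (FSep_measurable_vol B C hB hC).ennreal_toReal
  refine Integrable.mono' (g := fun _ => (volume B).toReal) ?_ hmeas.aestronglyMeasurable ?_
  · exact integrableOn_const hAf
  · filter_upwards with a
    rw [Real.norm_eq_abs, abs_of_nonneg ENNReal.toReal_nonneg]
    exact ENNReal.toReal_mono hBf (measure_mono inter_subset_left)

open Set in
private lemma F_union_left {A₁ A₂ B C : Set (ℝ × ℝ)} (h : Disjoint A₁ A₂)
    (hA₂ : MeasurableSet A₂) (hB : MeasurableSet B) (hC : MeasurableSet C)
    (hA₁f : volume A₁ ≠ ⊤) (hA₂f : volume A₂ ≠ ⊤) (hBf : volume B ≠ ⊤) :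
    F (A₁ ∪ A₂) B C = F A₁ B C + F A₂ B C := by
  unfold F
  exact setIntegral_union h hA₂ (FSep_intOn A₁ B C hB hC hA₁f hBf)
    (FSep_intOn A₂ B C hB hC hA₂f hBf)

open Set in
private lemma F_union_mid {A B₁ B₂ C : Set (ℝ × ℝ)} (h : Disjoint B₁ B₂)
    (hB₁ : MeasurableSet B₁) (hB₂ : MeasurableSet B₂) (hC : MeasurableSet C)
    (hAf : volume A ≠ ⊤) (hB₁f : volume B₁ ≠ ⊤) (hB₂f : volume B₂ ≠ ⊤) :
    F A (B₁ ∪ B₂) C = F A B₁ C + F A B₂ C := by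
  unfold F
  rw [← integral_add (FSep_intOn A B₁ C hB₁ hC hAf hB₁f) (FSep_intOn A B₂ C hB₂ hC hAf hB₂f)]
  apply integral_congr_ae
  filter_upwards with a
  have hX : MeasurableSet ((fun x => x + a) '' C) := by
    rw [FSep_image_add_eq]; exact hC.preimage (measurable_id.sub measurable_const)
  have : (B₁ ∪ B₂) ∩ ((fun x => x + a) '' C)
      = (B₁ ∩ ((fun x => x + a) '' C)) ∪ (B₂ ∩ ((fun x => x + a) '' C)) := by
    rw [union_inter_distrib_right]
  rw [this, measure_union (h.mono inter_subset_left inter_subset_left) (hB₂.inter hX),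
    ENNReal.toReal_add (ne_top_of_le_ne_top hB₁f (measure_mono inter_subset_left))
      (ne_top_of_le_ne_top hB₂f (measure_mono inter_subset_left))]

open Set in
private lemma F_union_right {A B C₁ C₂ : Set (ℝ × ℝ)} (h : Disjoint C₁ C₂)
    (hC₁ : MeasurableSet C₁) (hC₂ : MeasurableSet C₂) (hB : MeasurableSet B)
    (hAf : volume A ≠ ⊤) (hBf : volume B ≠ ⊤) :
    F A B (C₁ ∪ C₂) = F A B C₁ + F A B C₂ := by
  unfold F
  rw [← integral_add (FSep_intOn A B C₁ hB hC₁ hAf hBf) (FSep_intOn A B C₂ hB hC₂ hAf hBf)]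
  apply integral_congr_ae
  filter_upwards with a
  have hX₂ : MeasurableSet ((fun x => x + a) '' C₂) := by
    rw [FSep_image_add_eq]; exact hC₂.preimage (measurable_id.sub measurable_const)
  have hd : Disjoint ((fun x => x + a) '' C₁) ((fun x => x + a) '' C₂) :=
    (Set.disjoint_image_of_injective (add_left_injective a) h)
  have : B ∩ ((fun x => x + a) '' (C₁ ∪ C₂))
      = (B ∩ ((fun x => x + a) '' C₁)) ∪ (B ∩ ((fun x => x + a) '' C₂)) := by
    rw [image_union, inter_union_distrib_left]
  rw [this, measure_union (hd.mono inter_subset_right inter_subset_right) (hB.inter hX₂),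
    ENNReal.toReal_add (ne_top_of_le_ne_top hBf (measure_mono inter_subset_left))
      (ne_top_of_le_ne_top hBf (measure_mono inter_subset_left))]

open Set in
private lemma F_neg (A B C : Set (ℝ × ℝ)) : F A B C = F (-A) (-B) (-C) := by
  unfold F
  have him : -A = Neg.neg '' A := (Set.image_neg_eq_neg (s := A)).symm
  rw [him, (Measure.measurePreserving_neg (volume : Measure (ℝ × ℝ))).setIntegral_image_emb
    (MeasurableEquiv.neg (ℝ × ℝ)).measurableEmbedding _ A]
  apply integral_congr_ae
  filter_upwards with a
  congr 1
  have hset : (-B) ∩ ((fun x => x + -a) '' (-C)) = -(B ∩ ((fun x => x + a) '' C)) := by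
    rw [FSep_image_add_eq, FSep_image_add_eq]
    ext y
    simp only [Set.mem_inter_iff, Set.mem_neg, Set.mem_preimage]
    constructor
    · rintro ⟨h1, h2⟩; exact ⟨h1, by simpa [neg_sub, sub_eq_add_neg, add_comm] using h2⟩
    · rintro ⟨h1, h2⟩; exact ⟨h1, by simpa [neg_sub, sub_eq_add_neg, add_comm] using h2⟩
  rw [hset, Measure.measure_neg]

open Set in
private lemma F_swap (A B C : Set (ℝ × ℝ)) : F A B C = F (-A) C B := by
  unfold F
  have him : -A = Neg.neg '' A := (Set.image_neg_eq_neg (s := A)).symm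
  rw [him, (Measure.measurePreserving_neg (volume : Measure (ℝ × ℝ))).setIntegral_image_emb
    (MeasurableEquiv.neg (ℝ × ℝ)).measurableEmbedding _ A]
  apply integral_congr_ae
  filter_upwards with a
  congr 1
  have hset : C ∩ ((fun x => x + -a) '' B) = (fun x => x + a) ⁻¹' (B ∩ ((fun x => x + a) '' C)) := by
    rw [FSep_image_add_eq, FSep_image_add_eq]
    ext y
    simp only [Set.mem_inter_iff, Set.mem_preimage, sub_neg_eq_add, add_sub_cancel_right]
    exact and_comm
  rw [hset, measure_preimage_add_right]


private def SD (s t : ℝ) : Set (ℝ × ℝ) :=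
  {p : ℝ × ℝ | 1/2 - s ≤ p.1 ∧ p.1 ≤ 1/2 ∧ 1/2 - t ≤ p.2 ∧ p.2 ≤ 1/2 ∧
    t * (1/2 - p.1) + s * (1/2 - p.2) ≤ s * t}

private lemma FSep_combo_mem {p1 p2 p3 : ℝ × ℝ} {a b c : ℝ} (ha : 0 ≤ a) (hb : 0 ≤ b)
    (hc : 0 ≤ c) (habc : a + b + c = 1) :
    a • p1 + b • p2 + c • p3 ∈ convexHull ℝ {p1, p2, p3} := by
  have h := Finset.centerMass_mem_convexHull (t := (Finset.univ : Finset (Fin 3)))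
    (w := ![a, b, c]) (z := ![p1, p2, p3]) (s := {p1, p2, p3})
    (by intro i _; fin_cases i <;> simpa)
    (by simp [Fin.sum_univ_three]; linarith)
    (by intro i _; fin_cases i <;> simp)
  convert h using 1
  rw [Finset.centerMass]
  simp [Fin.sum_univ_three, habc]

private lemma FSep_hull_eq {s t : ℝ} (hs : 0 ≤ s) (hs' : s ≤ 1/2) (ht : 0 ≤ t) (ht' : t ≤ 1/2) :
    convexHull ℝ {(1/2 - s, 1/2), (1/2, 1/2), ((1/2 : ℝ), 1/2 - t)} = SD s t := by
  apply le_antisymm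
  · apply convexHull_min
    · rintro p hp
      simp only [Set.mem_insert_iff, Set.mem_singleton_iff] at hp
      rcases hp with rfl | rfl | rfl <;> refine ⟨?_, ?_, ?_, ?_, ?_⟩ <;> simp <;> nlinarith
    · rintro x ⟨hx1, hx2, hx3, hx4, hx5⟩ y ⟨hy1, hy2, hy3, hy4, hy5⟩ a b ha hb hab
      have hb' : b = 1 - a := by linarith
      subst hb'
      refine ⟨?_, ?_, ?_, ?_, ?_⟩ <;>
          simp only [Prod.fst_add, Prod.snd_add, Prod.smul_fst, Prod.smul_snd, smul_eq_mul]
      · nlinarith [mul_le_mul_of_nonneg_left hx1 ha, mul_le_mul_of_nonneg_left hy1 hb]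
      · nlinarith [mul_le_mul_of_nonneg_left hx2 ha, mul_le_mul_of_nonneg_left hy2 hb]
      · nlinarith [mul_le_mul_of_nonneg_left hx3 ha, mul_le_mul_of_nonneg_left hy3 hb]
      · nlinarith [mul_le_mul_of_nonneg_left hx4 ha, mul_le_mul_of_nonneg_left hy4 hb]
      · nlinarith [mul_le_mul_of_nonneg_left hx5 ha, mul_le_mul_of_nonneg_left hy5 hb]
  · rintro p ⟨h1, h2, h3, h4, h5⟩
    rcases eq_or_lt_of_le hs with hs0 | hs0
    · rcases eq_or_lt_of_le ht with ht0 | ht0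
      · -- s = 0, t = 0
        have hp : p = ((1:ℝ)/2 - s, (1:ℝ)/2) := by
          apply Prod.ext <;> simp <;> linarith [h1, h2, h3, h4]
        rw [hp]
        exact subset_convexHull ℝ _ (by simp)
      · -- s = 0, t > 0
        subst hs0
        have htn : t ≠ 0 := ne_of_gt ht0
        have key : p = (0:ℝ) • ((1:ℝ)/2 - 0, (1:ℝ)/2) + (1 - (1/2 - p.2)/t) • ((1:ℝ)/2, (1:ℝ)/2)
            + ((1/2 - p.2)/t) • ((1:ℝ)/2, (1:ℝ)/2 - t) := by
          apply Prod.ext <;>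
            simp only [Prod.fst_add, Prod.snd_add, Prod.smul_fst, Prod.smul_snd, smul_eq_mul] <;>
            field_simp <;> nlinarith [h1, h2]
        rw [key]
        exact FSep_combo_mem le_rfl
          (by rw [sub_nonneg, div_le_one ht0]; linarith)
          (div_nonneg (by linarith) ht0.le) (by ring)
    · rcases eq_or_lt_of_le ht with ht0 | ht0
      · -- t = 0, s > 0
        subst ht0
        have hsn : s ≠ 0 := ne_of_gt hs0
        have key : p = ((1/2 - p.1)/s) • ((1:ℝ)/2 - s, (1:ℝ)/2)
            + (1 - (1/2 - p.1)/s) • ((1:ℝ)/2, (1:ℝ)/2)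
            + (0:ℝ) • ((1:ℝ)/2, (1:ℝ)/2 - 0) := by
          apply Prod.ext <;>
            simp only [Prod.fst_add, Prod.snd_add, Prod.smul_fst, Prod.smul_snd, smul_eq_mul] <;>
            field_simp <;> nlinarith [h3, h4]
        rw [key]
        exact FSep_combo_mem (div_nonneg (by linarith) hs0.le)
          (by rw [sub_nonneg, div_le_one hs0]; linarith) le_rfl (by ring)
      · -- s > 0, t > 0
        have hsn : s ≠ 0 := ne_of_gt hs0
        have htn : t ≠ 0 := ne_of_gt ht0
        have hb : 0 ≤ 1 - (1/2 - p.1)/s - (1/2 - p.2)/t := by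
          rw [sub_sub, sub_nonneg, div_add_div _ _ (ne_of_gt hs0) (ne_of_gt ht0),
            div_le_one (mul_pos hs0 ht0)]
          nlinarith [h5]
        have key : p = ((1/2 - p.1)/s) • ((1:ℝ)/2 - s, (1:ℝ)/2)
            + (1 - (1/2 - p.1)/s - (1/2 - p.2)/t) • ((1:ℝ)/2, (1:ℝ)/2)
            + ((1/2 - p.2)/t) • ((1:ℝ)/2, (1:ℝ)/2 - t) := by
          apply Prod.ext <;>
            simp only [Prod.fst_add, Prod.snd_add, Prod.smul_fst, Prod.smul_snd, smul_eq_mul] <;>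
            field_simp <;> ring
        rw [key]
        exact FSep_combo_mem (div_nonneg (by linarith) hs0.le) hb
          (div_nonneg (by linarith) ht0.le) (by ring)

private lemma FSep_empty {s t : ℝ} (hs : 0 ≤ s) (hs' : s ≤ 1/2) (ht : 0 ≤ t) (ht' : t ≤ 1/2)
    {a : ℝ × ℝ} (ha1 : -(1/2) ≤ a.1) (ha2 : a.1 ≤ 1/2) (ha3 : -(1/2) ≤ a.2) (ha4 : a.2 ≤ 1/2)
    (haT : a ∉ SD s t) : SD s t ∩ ((fun x => x + a) '' (-SD s t)) = ∅ := by
  rw [Set.eq_empty_iff_forall_notMem]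
  rintro x ⟨hxS, y, hyN, hyx⟩
  obtain ⟨hx1, hx2, hx3, hx4, hx5⟩ := hxS
  obtain ⟨hu1, hu2, hu3, hu4, hu5⟩ := Set.mem_neg.mp hyN
  simp only [Prod.fst_neg, Prod.snd_neg] at hu1 hu2 hu3 hu4 hu5
  have e1 : x.1 = y.1 + a.1 := by rw [← hyx]; rfl
  have e2 : x.2 = y.2 + a.2 := by rw [← hyx]; rfl
  exact haT ⟨by linarith, by linarith, by linarith, by linarith, by
    nlinarith [mul_nonneg ht (show (0:ℝ) ≤ 1/2 - s by linarith),
      mul_nonneg hs (show (0:ℝ) ≤ 1/2 - t by linarith)]⟩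

private lemma FSep_disj {s t : ℝ} (hs : 0 ≤ s) (hs' : s ≤ 1/2) (ht : 0 ≤ t) (ht' : t ≤ 1/2) :
    Disjoint (SD s t) (-SD s t) := by
  rw [Set.disjoint_left]
  rintro p ⟨p1, p2, p3, p4, p5⟩ hn
  obtain ⟨q1, q2, q3, q4, q5⟩ := Set.mem_neg.mp hn
  simp only [Prod.fst_neg, Prod.snd_neg] at q1 q2 q3 q4 q5
  nlinarith [mul_nonneg ht (show (0:ℝ) ≤ 1/2 - s by linarith),
    mul_nonneg hs (show (0:ℝ) ≤ 1/2 - t by linarith),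
    mul_nonneg (show (0:ℝ) ≤ 2*s - 1 by linarith) (show (0:ℝ) ≤ 2*t - 1 by linarith)]

theorem F_separation (s t : ℝ) (hs : 0 ≤ s) (hs' : s ≤ 1/2) (ht : 0 ≤ t) (ht' : t ≤ 1/2) :
    let Q : Set (ℝ × ℝ) := Set.Icc (-1/2, -1/2) (1/2, 1/2)
    let T : Set (ℝ × ℝ) :=
      convexHull ℝ {(1/2 - s, 1/2), (1/2, 1/2), ((1/2 : ℝ), 1/2 - t)}
    let H : Set (ℝ × ℝ) := Q \ (T ∪ (fun x => -x) '' T)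
    F H H H = F Q Q Q - 4 * F H H T - 2 * F H T T - 2 * F T Q Q := by
  intro Q T H
  have hQ : Q = Set.Icc (-1/2, -1/2) (1/2, 1/2) := rfl
  have hH : H = Q \ (T ∪ (fun x => -x) '' T) := rfl
  set T' : Set (ℝ × ℝ) := (fun x => -x) '' T with hT'def
  have hTS : T = SD s t := FSep_hull_eq hs hs' ht ht'
  have hT'eq : T' = -T := Set.image_neg_eq_neg
  have hnegT' : -T' = T := by rw [hT'eq, neg_neg]
  have hT'S : T' = -(SD s t) := by rw [hT'eq, hTS]
  have hQneg : -Q = Q := by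
    rw [hQ]; ext p
    simp only [Set.mem_neg, Set.mem_Icc, Prod.le_def, Prod.fst_neg, Prod.snd_neg]
    norm_num
    constructor <;> rintro ⟨⟨u1, u2⟩, u3, u4⟩ <;> refine ⟨⟨?_, ?_⟩, ?_, ?_⟩ <;> linarith
  -- measurability
  have hQm : MeasurableSet Q := measurableSet_Icc
  have hTm : MeasurableSet T :=
    (((Set.finite_singleton _).insert _).insert _)|>.isCompact_convexHull ℝ |>.measurableSet
  have hT'm : MeasurableSet T' := by rw [hT'eq]; exact hTm.neg
  have hHm : MeasurableSet H := hQm.diff (hTm.union hT'm)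
  -- subsets of Q
  have hSDQ : SD s t ⊆ Q := by
    rintro p ⟨h1, h2, h3, h4, h5⟩
    rw [hQ]
    simp only [Set.mem_Icc, Prod.le_def]
    norm_num
    exact ⟨⟨by linarith, by linarith⟩, by linarith, by linarith⟩
  have hTQ : T ⊆ Q := by rw [hTS]; exact hSDQ
  have hT'Q : T' ⊆ Q := by
    rw [hT'S]
    intro x hx
    have := hSDQ (Set.mem_neg.mp hx)
    rw [← hQneg]
    simpa [Set.mem_neg] using this
  -- finiteness
  have hQf : volume Q ≠ ⊤ := by rw [hQ]; exact (isCompact_Icc.measure_lt_top).ne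
  have hTf : volume T ≠ ⊤ := ne_top_of_le_ne_top hQf (measure_mono hTQ)
  have hT'f : volume T' ≠ ⊤ := ne_top_of_le_ne_top hQf (measure_mono hT'Q)
  have hHf : volume H ≠ ⊤ := ne_top_of_le_ne_top hQf (measure_mono (hH ▸ Set.diff_subset))
  have hTT'f : volume (T ∪ T') ≠ ⊤ :=
    ne_top_of_le_ne_top hQf (measure_mono (Set.union_subset hTQ hT'Q))
  -- disjointness and decomposition
  have hdTT' : Disjoint T T' := by rw [hTS, hT'S]; exact FSep_disj hs hs' ht ht'
  have hdH : Disjoint H (T ∪ T') := by rw [hH]; exact Set.disjoint_sdiff_left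
  have hdHT : Disjoint H T := hdH.mono_right Set.subset_union_left
  have hdHT' : Disjoint H T' := hdH.mono_right Set.subset_union_right
  have hQdec : H ∪ (T ∪ T') = Q := by
    rw [hH]; exact Set.diff_union_of_subset (Set.union_subset hTQ hT'Q)
  -- neg of H
  have hHneg : -H = H := by
    ext p
    rw [Set.mem_neg, hH]
    simp only [← hT'def, Set.mem_diff, Set.mem_union]
    have m1 : -p ∈ Q ↔ p ∈ Q := by rw [← Set.mem_neg, hQneg]
    have m2 : -p ∈ T ↔ p ∈ T' := by rw [hT'eq, Set.mem_neg]
    have m3 : -p ∈ T' ↔ p ∈ T := by rw [← hnegT', Set.mem_neg]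
    rw [m1, m2, m3]
    tauto
  -- zero lemmas
  have z1 : F H T T' = 0 := by
    have hset : ∀ a ∈ H, T ∩ ((fun x => x + a) '' T') = ∅ := by
      intro a ha
      rw [hH] at ha
      obtain ⟨haQ, haN⟩ := ha
      rw [hQ, Set.mem_Icc] at haQ
      obtain ⟨hl, hu⟩ := haQ
      rw [Prod.le_def] at hl hu
      have haT : a ∉ SD s t := fun hc => haN (Or.inl (by rw [hTS]; exact hc))
      rw [hTS, hT'S]
      exact FSep_empty hs hs' ht ht'
        (by have h := hl.1; norm_num at h ⊢; linarith)
        (by have h := hu.1; norm_num at h ⊢; linarith)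
        (by have h := hl.2; norm_num at h ⊢; linarith)
        (by have h := hu.2; norm_num at h ⊢; linarith) haT
    unfold F
    rw [setIntegral_congr_fun (g := fun _ => (0:ℝ)) hHm (fun a ha => by rw [hset a ha]; simp),
      integral_zero]
  have z2 : F H T' T = 0 := by
    rw [F_neg H T' T, hHneg, hnegT', ← hT'eq]
    exact z1
  -- symmetry facts
  have sTQQ : F T' Q Q = F T Q Q := by rw [F_neg T' Q Q, hnegT', hQneg]
  have sHHT : F H H T' = F H H T := by rw [F_neg H H T', hHneg, hnegT']
  have sHTH : F H T H = F H H T := by rw [F_swap H H T, hHneg]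
  have sHT'H : F H T' H = F H H T := by rw [F_swap H T' H, hHneg]; exact sHHT
  have sHT'T' : F H T' T' = F H T T := by rw [F_neg H T T, hHneg, ← hT'eq]
  -- expansions
  have e1 : F Q Q Q = F H Q Q + (F T Q Q + F T' Q Q) := by
    nth_rewrite 1 [← hQdec]
    rw [F_union_left hdH (hTm.union hT'm) hQm hQm hHf hTT'f hQf,
      F_union_left hdTT' hT'm hQm hQm hTf hT'f hQf]
  have e2 : F H Q Q = F H H Q + (F H T Q + F H T' Q) := by
    nth_rewrite 1 [← hQdec]
    rw [F_union_mid hdH hHm (hTm.union hT'm) hQm hHf hHf hTT'f,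
      F_union_mid hdTT' hTm hT'm hQm hHf hTf hT'f]
  have e3 : F H H Q = F H H H + (F H H T + F H H T') := by
    nth_rewrite 1 [← hQdec]
    rw [F_union_right hdH hHm (hTm.union hT'm) hHm hHf hHf,
      F_union_right hdTT' hTm hT'm hHm hHf hHf]
  have e4 : F H T Q = F H T H + (F H T T + F H T T') := by
    nth_rewrite 1 [← hQdec]
    rw [F_union_right hdH hHm (hTm.union hT'm) hTm hHf hTf,
      F_union_right hdTT' hTm hT'm hTm hHf hTf]
  have e5 : F H T' Q = F H T' H + (F H T' T + F H T' T') := by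
    nth_rewrite 1 [← hQdec]
    rw [F_union_right hdH hHm (hTm.union hT'm) hT'm hHf hT'f,
      F_union_right hdTT' hTm hT'm hT'm hHf hT'f]
  linarith [e1, e2, e3, e4, e5, z1, z2, sTQQ, sHHT, sHTH, sHT'H, sHT'T']
end
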